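/- Let (G,m,w,B) be a connected weighted finite graph with boundary. Then for every i = 1, 2, …, |Ω|, the i-th Neumann eigenvalue dominates the i-th Laplacian eigenvalue: ν_i ≥ μ_i. -/

import Mathlib

open Finset

noncomputable section

/-- The weighted graph Laplacian `Δ`. -/
def glap {V : Type*} [Fintype V] (m : V → ℝ) (w : V → V → ℝ) (u : V → ℝ) (x : V) : ℝ :=
  (1 / m x) * ∑ y, (u y - u x) * w x y

/-- Extension by zero to the boundary. -/
def E0 {V : Type*} [DecidableEq V] (B : Finset V) (u : {x : V // x ∉ B} → ℝ) (x : V) : ℝ :=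
  if h : x ∈ B then 0 else u ⟨x, h⟩

/-- The normal extension. -/
def N0 {V : Type*} [Fintype V] [DecidableEq V] (w : V → V → ℝ) (B : Finset V)
    (u : {x : V // x ∉ B} → ℝ) (x : V) : ℝ :=
  if h : x ∈ B then
    (∑ y : {x : V // x ∉ B}, u y * w x y.1) / (∑ y : {x : V // x ∉ B}, w x y.1)
  else u ⟨x, h⟩

/-- The Dirichlet Laplacian `Δ^D`. -/
def dlap {V : Type*} [Fintype V] [DecidableEq V] (m : V → ℝ) (w : V → V → ℝ) (B : Finset V)
    (u : {x : V // x ∉ B} → ℝ) (x : {x : V // x ∉ B}) : ℝ :=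
  glap m w (E0 B u) x.1

/-- The Neumann Laplacian `Δ^N`. -/
def nlap {V : Type*} [Fintype V] [DecidableEq V] (m : V → ℝ) (w : V → V → ℝ) (B : Finset V)
    (u : {x : V // x ∉ B} → ℝ) (x : {x : V // x ∉ B}) : ℝ :=
  glap m w (N0 w B u) x.1

/-- The Laplacian `Δ_Ω` of the induced interior subgraph. -/
def olap {V : Type*} [Fintype V] [DecidableEq V] (m : V → ℝ) (w : V → V → ℝ) (B : Finset V)
    (u : {x : V // x ∉ B} → ℝ) (x : {x : V // x ∉ B}) : ℝ :=
  (1 / m x.1) * ∑ y : {x : V // x ∉ B}, (u y - u x) * w x.1 y.1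

/-- The weighted boundary vertex degree `Deg_b`. -/
def degb {V : Type*} [DecidableEq V] (m : V → ℝ) (w : V → V → ℝ) (B : Finset V) (x : V) : ℝ :=
  (1 / m x) * ∑ y ∈ B, w x y

/-- The operator `T = A_B ∘ Deg⁻¹ ∘ A_Ω`. -/
def bop {V : Type*} [Fintype V] [DecidableEq V] (m : V → ℝ) (w : V → V → ℝ) (B : Finset V)
    (u : {x : V // x ∉ B} → ℝ) (z : {x : V // x ∉ B}) : ℝ :=
  (1 / m z.1) * ∑ x ∈ B, w x z.1 *
    ((∑ y : {x : V // x ∉ B}, u y * w x y.1) / (∑ y : {x : V // x ∉ B}, w x y.1))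

/-- The Bakry–Émery `Γ` operator of a Laplacian-type operator `L`. -/
def gam {W : Type*} (L : (W → ℝ) → (W → ℝ)) (f g : W → ℝ) (x : W) : ℝ :=
  (L (fun y => f y * g y) x - f x * L g x - g x * L f x) / 2

/-- The Bakry–Émery `Γ₂` operator of a Laplacian-type operator `L`. -/
def gam2 {W : Type*} (L : (W → ℝ) → (W → ℝ)) (f : W → ℝ) (x : W) : ℝ :=
  L (gam L f f) x / 2 - gam L f (L f) x

/-- `e` is a complete list of the eigenvalues of `L` : there is a corresponding eigenbasis
which is orthonormal with respect to the inner product weighted by `m`. -/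
def IsEigenBasis {n : ℕ} {W : Type*} [Fintype W] (m : W → ℝ)
    (L : (W → ℝ) → (W → ℝ)) (e : Fin n → ℝ) : Prop :=
  ∃ φ : Fin n → W → ℝ,
    (∀ i j, (∑ x, φ i x * φ j x * m x) = if i = j then 1 else 0) ∧
    ∀ i, L (φ i) = fun x => e i * φ i x

lemma exch {W ι : Type*} [Fintype W] (s : Finset ι) (c : ι → ℝ)
    (f : ι → W → ℝ) (g : W → ℝ) :
    ∑ x, (∑ j ∈ s, c j * f j x) * g x = ∑ j ∈ s, c j * ∑ x, f j x * g x := by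
  calc ∑ x, (∑ j ∈ s, c j * f j x) * g x
      = ∑ x, ∑ j ∈ s, c j * (f j x * g x) := by
        refine Finset.sum_congr rfl fun x _ => ?_
        rw [Finset.sum_mul]
        exact Finset.sum_congr rfl fun j _ => by ring
    _ = ∑ j ∈ s, c j * ∑ x, f j x * g x := by
        rw [Finset.sum_comm]
        exact Finset.sum_congr rfl fun j _ => by rw [Finset.mul_sum]

lemma sum_ip {W ι : Type*} [Fintype W] (mW : W → ℝ) (s : Finset ι) (c : ι → ℝ)
    (f : ι → W → ℝ) (g : W → ℝ) :
    ∑ x, (∑ j ∈ s, c j * f j x) * g x * mW x = ∑ j ∈ s, c j * ∑ x, f j x * g x * mW x := by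
  have h := exch s c f (fun x => g x * mW x)
  simpa [mul_assoc] using h

lemma ip_coeff_emb {W : Type*} [Fintype W] (mW : W → ℝ) {n r : ℕ}
    (ψ : Fin n → W → ℝ)
    (horth : ∀ i j, (∑ x, ψ i x * ψ j x * mW x) = if i = j then 1 else 0)
    (e : Fin r → Fin n) (he : Function.Injective e)
    (c : Fin r → ℝ) (k : Fin r) :
    ∑ x, (∑ j, c j * ψ (e j) x) * ψ (e k) x * mW x = c k := by
  rw [sum_ip]
  simp [horth, he.eq_iff]

lemma glap_sum {V ι : Type*} [Fintype V] (m : V → ℝ) (w : V → V → ℝ) (s : Finset ι)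
    (a : ι → ℝ) (F : ι → V → ℝ) (x : V) :
    glap m w (fun z => ∑ j ∈ s, a j * F j z) x = ∑ j ∈ s, a j * glap m w (F j) x := by
  unfold glap
  calc (1 / m x) * ∑ y, ((∑ j ∈ s, a j * F j y) - (∑ j ∈ s, a j * F j x)) * w x y
      = (1 / m x) * ∑ y, ∑ j ∈ s, a j * ((F j y - F j x) * w x y) := by
        congr 1
        refine Finset.sum_congr rfl fun y _ => ?_
        rw [← Finset.sum_sub_distrib, Finset.sum_mul]
        exact Finset.sum_congr rfl fun j _ => by ring
    _ = ∑ j ∈ s, a j * ((1 / m x) * ∑ y, (F j y - F j x) * w x y) := by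
        rw [Finset.sum_comm, Finset.mul_sum]
        refine Finset.sum_congr rfl fun j _ => ?_
        simp only [Finset.mul_sum]
        exact Finset.sum_congr rfl fun y _ => by ring

lemma N0_sum {V ι : Type*} [Fintype V] [DecidableEq V] (w : V → V → ℝ) (B : Finset V)
    (s : Finset ι) (a : ι → ℝ) (φ : ι → {x : V // x ∉ B} → ℝ) (x : V) :
    N0 w B (fun z => ∑ j ∈ s, a j * φ j z) x = ∑ j ∈ s, a j * N0 w B (φ j) x := by
  unfold N0
  by_cases h : x ∈ B
  · simp only [dif_pos h]
    rw [eq_comm]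
    calc ∑ j ∈ s, a j * ((∑ y : {x : V // x ∉ B}, φ j y * w x y.1) /
            (∑ y : {x : V // x ∉ B}, w x y.1))
        = (∑ j ∈ s, a j * ∑ y : {x : V // x ∉ B}, φ j y * w x y.1) /
            (∑ y : {x : V // x ∉ B}, w x y.1) := by
          rw [Finset.sum_div]
          exact Finset.sum_congr rfl fun j _ => (mul_div_assoc _ _ _).symm
      _ = (∑ y : {x : V // x ∉ B}, (∑ j ∈ s, a j * φ j y) * w x y.1) /
            (∑ y : {x : V // x ∉ B}, w x y.1) := by
          rw [exch s a φ (fun y => w x y.1)]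
  · simp only [dif_neg h]

lemma glap_quad_nonpos {V : Type*} [Fintype V] (m : V → ℝ) (w : V → V → ℝ)
    (hm : ∀ x, 0 < m x) (hsym : ∀ x y, w x y = w y x) (hnn : ∀ x y, 0 ≤ w x y)
    (f : V → ℝ) :
    ∑ x, glap m w f x * f x * m x ≤ 0 := by
  have key : ∀ x, glap m w f x * f x * m x = ∑ y, f x * ((f y - f x) * w x y) := by
    intro x
    unfold glap
    have hmx : m x ≠ 0 := (hm x).ne'
    rw [Finset.mul_sum, Finset.sum_mul, Finset.sum_mul]
    refine Finset.sum_congr rfl fun y _ => ?_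
    field_simp
  set S := ∑ x, glap m w f x * f x * m x with hS
  have h1 : S = ∑ x, ∑ y, f x * ((f y - f x) * w x y) := Finset.sum_congr rfl fun x _ => key x
  have h2 : S = ∑ x, ∑ y, f y * ((f x - f y) * w x y) := by
    rw [h1, Finset.sum_comm]
    refine Finset.sum_congr rfl fun x _ => Finset.sum_congr rfl fun y _ => ?_
    rw [hsym x y]
  have h3 : (∑ x, ∑ y, f x * ((f y - f x) * w x y)) + (∑ x, ∑ y, f y * ((f x - f y) * w x y))
      = ∑ x, ∑ y, -((f y - f x) * (f y - f x) * w x y) := by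
    rw [← Finset.sum_add_distrib]
    refine Finset.sum_congr rfl fun x _ => ?_
    rw [← Finset.sum_add_distrib]
    exact Finset.sum_congr rfl fun y _ => by ring
  have h4 : ∑ x, ∑ y : V, -((f y - f x) * (f y - f x) * w x y) ≤ 0 := by
    refine Finset.sum_nonpos fun x _ => Finset.sum_nonpos fun y _ => ?_
    have := mul_nonneg (mul_self_nonneg (f y - f x)) (hnn x y)
    linarith
  linarith

lemma glap_N0_boundary {V : Type*} [Fintype V] [DecidableEq V] (m : V → ℝ) (w : V → V → ℝ)
    (B : Finset V) (x : V) (hx : x ∈ B) (hwB : ∀ y ∈ B, w x y = 0)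
    (hpos : (∑ y : {x : V // x ∉ B}, w x y.1) ≠ 0)
    (u : {x : V // x ∉ B} → ℝ) : glap m w (N0 w B u) x = 0 := by
  unfold glap
  have hNx : N0 w B u x = (∑ y : {x : V // x ∉ B}, u y * w x y.1) /
      (∑ y : {x : V // x ∉ B}, w x y.1) := dif_pos hx
  have hmain : ∑ y, (N0 w B u y - N0 w B u x) * w x y = 0 := by
    rw [← Finset.sum_add_sum_compl B]
    have h1 : ∑ y ∈ B, (N0 w B u y - N0 w B u x) * w x y = 0 :=
      Finset.sum_eq_zero fun y hy => by rw [hwB y hy, mul_zero]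
    have h2 : ∑ y ∈ Bᶜ, (N0 w B u y - N0 w B u x) * w x y
        = ∑ y : {x : V // x ∉ B}, (u y - N0 w B u x) * w x y.1 := by
      rw [Finset.sum_subtype Bᶜ (fun y => Finset.mem_compl) ]
      refine Finset.sum_congr rfl fun y _ => ?_
      congr 1
      · congr 1
        rw [N0, dif_neg y.2]
    rw [h1, h2, zero_add]
    have h3 : ∑ y : {x : V // x ∉ B}, (u y - N0 w B u x) * w x y.1
        = (∑ y : {x : V // x ∉ B}, u y * w x y.1) -
          N0 w B u x * ∑ y : {x : V // x ∉ B}, w x y.1 := by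
      rw [Finset.mul_sum, ← Finset.sum_sub_distrib]
      exact Finset.sum_congr rfl fun y _ => by ring
    rw [h3, hNx, div_mul_cancel₀ _ hpos, sub_self]
  rw [hmain, mul_zero]

lemma sum_glap_N0_split {V : Type*} [Fintype V] [DecidableEq V] (m : V → ℝ) (w : V → V → ℝ)
    (B : Finset V) (v : {x : V // x ∉ B} → ℝ)
    (hbd : ∀ x ∈ B, glap m w (N0 w B v) x = 0) :
    ∑ x, glap m w (N0 w B v) x * N0 w B v x * m x
      = ∑ x : {x : V // x ∉ B}, nlap m w B v x * v x * m x.1 := by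
  rw [← Finset.sum_add_sum_compl B]
  have h1 : ∑ x ∈ B, glap m w (N0 w B v) x * N0 w B v x * m x = 0 :=
    Finset.sum_eq_zero fun x hx => by rw [hbd x hx, zero_mul, zero_mul]
  rw [h1, zero_add, Finset.sum_subtype Bᶜ (fun y => Finset.mem_compl)]
  refine Finset.sum_congr rfl fun x _ => ?_
  have : N0 w B v x.1 = v x := by rw [N0, dif_neg x.2]
  rw [nlap, this]

theorem stmt_0 {V : Type*} [Fintype V] [DecidableEq V]
    (G : SimpleGraph V) (hconn : G.Connected)
    (m : V → ℝ) (hm : ∀ x, 0 < m x)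
    (w : V → V → ℝ) (hwsymm : ∀ x y, w x y = w y x)
    (hwpos : ∀ x y, G.Adj x y → 0 < w x y)
    (hw0 : ∀ x y, ¬ G.Adj x y → w x y = 0)
    (B : Finset V) (hB : B.Nonempty)
    (hBB : ∀ x ∈ B, ∀ y ∈ B, ¬ G.Adj x y)
    (hBint : ∀ x ∈ B, ∃ y, y ∉ B ∧ G.Adj x y)
    (μ : Fin (Fintype.card V) → ℝ) (hμmono : Monotone μ)
    (hμ : IsEigenBasis m (glap m w) (fun i => -(μ i)))
    (ν : Fin (Fintype.card {x : V // x ∉ B}) → ℝ) (hνmono : Monotone ν)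
    (hν : IsEigenBasis (fun x : {x : V // x ∉ B} => m x.1) (nlap m w B) (fun i => -(ν i)))
    :
    ∀ i : Fin (Fintype.card {x : V // x ∉ B}), μ ⟨i.1, lt_of_lt_of_le i.2 (Fintype.card_subtype_le _)⟩ ≤ ν i := by
  classical
  intro i
  obtain ⟨ψ, hψo, hψe⟩ := hμ
  obtain ⟨φ, hφo, hφe⟩ := hν
  set iv : Fin (Fintype.card V) := ⟨i.1, lt_of_lt_of_le i.2 (Fintype.card_subtype_le _)⟩ with hiv
  -- weight nonneg
  have hwnn : ∀ x y, 0 ≤ w x y := fun x y => by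
    by_cases h : G.Adj x y
    · exact (hwpos x y h).le
    · rw [hw0 x y h]
  have hwB : ∀ x ∈ B, ∀ y ∈ B, w x y = 0 := fun x hx y hy => hw0 x y (hBB x hx y hy)
  have hden : ∀ x ∈ B, (0:ℝ) < ∑ y : {x : V // x ∉ B}, w x y.1 := fun x hx => by
    obtain ⟨y0, hy0B, hy0adj⟩ := hBint x hx
    exact Finset.sum_pos' (fun y _ => hwnn x y.1)
      ⟨⟨y0, hy0B⟩, Finset.mem_univ _, hwpos x y0 hy0adj⟩
  have hbd : ∀ u : {x : V // x ∉ B} → ℝ, ∀ x ∈ B, glap m w (N0 w B u) x = 0 :=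
    fun u x hx => glap_N0_boundary m w B x hx (hwB x hx) (hden x hx).ne' u
  -- the split identity for every interior function
  have hsplit : ∀ v : {x : V // x ∉ B} → ℝ,
      ∑ x, glap m w (N0 w B v) x * N0 w B v x * m x
        = ∑ x : {x : V // x ∉ B}, nlap m w B v x * v x * m x.1 :=
    fun v => sum_glap_N0_split m w B v (fun x hx => hbd v x hx)
  -- ν i is nonnegative
  have hνnn : 0 ≤ ν i := by
    have h1 : ∑ x : {x : V // x ∉ B}, nlap m w B (φ i) x * φ i x * m x.1 = -(ν i) := by
      rw [hφe i]
      have : ∀ x : {x : V // x ∉ B}, -(ν i) * φ i x * φ i x * m x.1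
          = -(ν i) * (φ i x * φ i x * m x.1) := fun x => by ring
      calc ∑ x : {x : V // x ∉ B}, -(ν i) * φ i x * φ i x * m x.1
          = -(ν i) * ∑ x : {x : V // x ∉ B}, φ i x * φ i x * m x.1 := by
            rw [Finset.mul_sum]; exact Finset.sum_congr rfl fun x _ => this x
        _ = -(ν i) := by rw [hφo i i]; simp
    have h2 := hsplit (φ i)
    have h3 := glap_quad_nonpos m w hm hwsymm hwnn (N0 w B (φ i))
    rw [h2, h1] at h3
    linarith
  -- the embedding of Fin (i+1) into Fin (card Ω)
  have hi1 : i.1 + 1 ≤ Fintype.card {x : V // x ∉ B} := i.2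
  set e : Fin (i.1+1) → Fin (Fintype.card {x : V // x ∉ B}) := Fin.castLE hi1 with he
  have heinj : Function.Injective e := Fin.castLE_injective hi1
  -- matrix and kernel vector
  set M : Matrix (Fin i.1) (Fin (i.1+1)) ℝ :=
    Matrix.of (fun k j => ∑ x, N0 w B (φ (e j)) x * ψ ⟨k.1, lt_trans k.2 iv.2⟩ x * m x) with hM
  have hker : ∃ c : Fin (i.1+1) → ℝ, c ≠ 0 ∧ ∀ k, ∑ j, M k j * c j = 0 := by
    have hni : ¬ Function.Injective M.mulVecLin := by
      intro hinj
      have hle := LinearMap.finrank_le_finrank_of_injective hinj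
      simp only [Module.finrank_fin_fun] at hle
      omega
    rw [Function.not_injective_iff] at hni
    obtain ⟨a, b, hab, hne⟩ := hni
    refine ⟨a - b, sub_ne_zero.mpr hne, fun k => ?_⟩
    have h0 : M.mulVecLin (a - b) = 0 := by rw [map_sub, hab, sub_self]
    have h1 := congrFun h0 k
    simpa [Matrix.mulVecLin, Matrix.mulVec, dotProduct] using h1
  obtain ⟨c, hc0, hcker⟩ := hker
  -- interior test function and its extension
  set v : {x : V // x ∉ B} → ℝ := fun z => ∑ j, c j * φ (e j) z with hv
  set u : V → ℝ := N0 w B v with hu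
  have hu_sum : ∀ x, u x = ∑ j, c j * N0 w B (φ (e j)) x := fun x =>
    N0_sum w B Finset.univ c (fun j => φ (e j)) x
  have hvx : ∀ z, v z = ∑ j, c j * φ (e j) z := fun z => rfl
  -- ψ is a basis
  haveI hnem : Nonempty (Fin (Fintype.card V)) := ⟨iv⟩
  have hli : LinearIndependent ℝ ψ := by
    rw [Fintype.linearIndependent_iff]
    intro g hg k
    have h1 : ∑ x, (∑ l, g l * ψ l x) * ψ k x * m x = g k :=
      ip_coeff_emb m ψ hψo id Function.injective_id g k
    have h0 : ∀ x, (∑ l, g l * ψ l x) = 0 := fun x => by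
      have := congrFun hg x
      simpa [Finset.sum_apply] using this
    rw [← h1]
    simp [h0]
  have hcard : Fintype.card (Fin (Fintype.card V)) = Module.finrank ℝ (V → ℝ) := by
    simp [Module.finrank_pi]
  set bV : Module.Basis (Fin (Fintype.card V)) ℝ (V → ℝ) := basisOfLinearIndependentOfCardEqFinrank hli hcard with hbV
  set r : Fin (Fintype.card V) → ℝ := fun l => bV.repr u l with hrr
  have hbVc : ∀ l : Fin (Fintype.card V), bV l = ψ l := fun l => by
    rw [hbV, coe_basisOfLinearIndependentOfCardEqFinrank]
  have hur : ∀ x, u x = ∑ l, r l * ψ l x := by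
    intro x
    have h1 : ∑ l, bV.repr u l • bV l = u := bV.sum_repr u
    have h2 := congrFun h1 x
    simp only [Finset.sum_apply, Pi.smul_apply, smul_eq_mul, hbVc] at h2
    exact h2.symm
  set d : Fin (Fintype.card V) → ℝ := fun l => ∑ x, u x * ψ l x * m x with hdd
  have hdr : ∀ l, d l = r l := fun l => by
    calc d l = ∑ x, (∑ l', r l' * ψ l' x) * ψ l x * m x := by
          refine Finset.sum_congr rfl fun x _ => by rw [← hur x]
      _ = r l := ip_coeff_emb m ψ hψo id Function.injective_id r l
  have hud : ∀ x, u x = ∑ l, d l * ψ l x := fun x => by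
    rw [hur x]
    exact Finset.sum_congr rfl fun l _ => by rw [hdr l]
  -- the constraints: d vanishes below level i
  have hdz : ∀ l : Fin (Fintype.card V), l.1 < i.1 → d l = 0 := by
    intro l hl
    have h1 : d l = ∑ j, c j * ∑ x, N0 w B (φ (e j)) x * ψ l x * m x := by
      calc d l = ∑ x, (∑ j, c j * N0 w B (φ (e j)) x) * ψ l x * m x := by
            refine Finset.sum_congr rfl fun x _ => by rw [← hu_sum x]
        _ = _ := sum_ip m Finset.univ c _ _
    have hMl : ∀ j, M ⟨l.1, hl⟩ j = ∑ x, N0 w B (φ (e j)) x * ψ l x * m x := by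
      intro j
      have hidx : (⟨(⟨l.1, hl⟩ : Fin i.1).1, lt_trans (⟨l.1, hl⟩ : Fin i.1).2 iv.2⟩ : Fin (Fintype.card V)) = l :=
        Fin.ext rfl
      rfl
    rw [h1]
    calc ∑ j, c j * ∑ x, N0 w B (φ (e j)) x * ψ l x * m x
        = ∑ j, M ⟨l.1, hl⟩ j * c j :=
          Finset.sum_congr rfl fun j _ => by rw [hMl j, mul_comm]
      _ = 0 := hcker ⟨l.1, hl⟩
  -- (A) the Rayleigh quotient over V
  have hglapu : ∀ x, glap m w u x = ∑ l, (d l * -(μ l)) * ψ l x := by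
    intro x
    have h1 : glap m w u x = glap m w (fun z => ∑ l, d l * ψ l z) x := by
      congr 1
      exact funext hud
    rw [h1, glap_sum]
    refine Finset.sum_congr rfl fun l _ => ?_
    rw [hψe l]
    ring
  have hdip : ∀ l, ∑ x, ψ l x * u x * m x = d l := fun l =>
    Finset.sum_congr rfl fun x _ => by ring
  have hSA : ∑ x, glap m w u x * u x * m x = ∑ l, (d l * -(μ l)) * d l := by
    calc ∑ x, glap m w u x * u x * m x
        = ∑ x, (∑ l, (d l * -(μ l)) * ψ l x) * u x * m x :=
          Finset.sum_congr rfl fun x _ => by rw [hglapu x]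
      _ = ∑ l, (d l * -(μ l)) * ∑ x, ψ l x * u x * m x := sum_ip m Finset.univ _ _ _
      _ = ∑ l, (d l * -(μ l)) * d l :=
          Finset.sum_congr rfl fun l _ => by rw [hdip l]
  have hnegS : ∑ l, (d l * -(μ l)) * d l = -∑ l, μ l * (d l * d l) := by
    rw [← Finset.sum_neg_distrib]
    exact Finset.sum_congr rfl fun l _ => by ring
  have hipuu_d : ∑ x, u x * u x * m x = ∑ l, d l * d l := by
    calc ∑ x, u x * u x * m x
        = ∑ x, (∑ l, d l * ψ l x) * u x * m x :=
          Finset.sum_congr rfl fun x _ => by rw [← hud x]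
      _ = ∑ l, d l * ∑ x, ψ l x * u x * m x := sum_ip m Finset.univ _ _ _
      _ = ∑ l, d l * d l := Finset.sum_congr rfl fun l _ => by rw [hdip l]
  have hlow : μ iv * (∑ l, d l * d l) ≤ ∑ l, μ l * (d l * d l) := by
    rw [Finset.mul_sum]
    refine Finset.sum_le_sum fun l _ => ?_
    by_cases hl : l.1 < i.1
    · rw [hdz l hl]
      simp
    · have hle : iv ≤ l := by
        rw [Fin.le_def]
        simpa [hiv] using Nat.le_of_not_lt hl
      exact mul_le_mul_of_nonneg_right (hμmono hle) (mul_self_nonneg _)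
  -- (C)(D) the Rayleigh quotient over the interior
  have hnlv : ∀ x : {x : V // x ∉ B}, nlap m w B v x = ∑ j, (c j * -(ν (e j))) * φ (e j) x := by
    intro x
    have h1 : nlap m w B v x = ∑ j, c j * nlap m w B (φ (e j)) x := by
      show glap m w (N0 w B v) x.1 = _
      rw [show N0 w B v = fun z => ∑ j, c j * N0 w B (φ (e j)) z from funext hu_sum]
      exact glap_sum m w Finset.univ c _ x.1
    rw [h1]
    refine Finset.sum_congr rfl fun j _ => ?_
    rw [hφe (e j)]
    ring
  have hvip : ∀ j, ∑ x : {x : V // x ∉ B}, φ (e j) x * v x * m x.1 = c j := by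
    intro j
    calc ∑ x : {x : V // x ∉ B}, φ (e j) x * v x * m x.1
        = ∑ x : {x : V // x ∉ B}, (∑ j', c j' * φ (e j') x) * φ (e j) x * m x.1 := by
          refine Finset.sum_congr rfl fun x _ => ?_
          rw [← hvx x]
          ring
      _ = c j := ip_coeff_emb _ φ hφo e heinj c j
  have hSO : ∑ x : {x : V // x ∉ B}, nlap m w B v x * v x * m x.1
      = ∑ j, (c j * -(ν (e j))) * c j := by
    calc ∑ x : {x : V // x ∉ B}, nlap m w B v x * v x * m x.1
        = ∑ x : {x : V // x ∉ B}, (∑ j, (c j * -(ν (e j))) * φ (e j) x) * v x * m x.1 :=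
          Finset.sum_congr rfl fun x _ => by rw [hnlv x]
      _ = ∑ j, (c j * -(ν (e j))) * ∑ x : {x : V // x ∉ B}, φ (e j) x * v x * m x.1 :=
          sum_ip _ Finset.univ _ _ _
      _ = ∑ j, (c j * -(ν (e j))) * c j :=
          Finset.sum_congr rfl fun j _ => by rw [hvip j]
  have hnegSO : ∑ j, (c j * -(ν (e j))) * c j = -∑ j, ν (e j) * (c j * c j) := by
    rw [← Finset.sum_neg_distrib]
    exact Finset.sum_congr rfl fun j _ => by ring
  have hhigh : ∑ j, ν (e j) * (c j * c j) ≤ ν i * ∑ j, c j * c j := by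
    rw [Finset.mul_sum]
    refine Finset.sum_le_sum fun j _ => ?_
    have hle : e j ≤ i := by
      rw [Fin.le_def]
      exact Nat.lt_succ_iff.mp j.2
    exact mul_le_mul_of_nonneg_right (hνmono hle) (mul_self_nonneg _)
  -- interior norm computations
  have hipvv : ∑ x : {x : V // x ∉ B}, v x * v x * m x.1 = ∑ j, c j * c j := by
    calc ∑ x : {x : V // x ∉ B}, v x * v x * m x.1
        = ∑ x : {x : V // x ∉ B}, (∑ j, c j * φ (e j) x) * v x * m x.1 :=
          Finset.sum_congr rfl fun x _ => by rw [← hvx x]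
      _ = ∑ j, c j * ∑ x : {x : V // x ∉ B}, φ (e j) x * v x * m x.1 :=
          sum_ip _ Finset.univ _ _ _
      _ = ∑ j, c j * c j := Finset.sum_congr rfl fun j _ => by rw [hvip j]
  have hcpos : 0 < ∑ j, c j * c j := by
    obtain ⟨j, hj⟩ := Function.ne_iff.mp hc0
    exact Finset.sum_pos' (fun j _ => mul_self_nonneg _)
      ⟨j, Finset.mem_univ _, mul_self_pos.mpr hj⟩
  have hvleu : ∑ x : {x : V // x ∉ B}, v x * v x * m x.1 ≤ ∑ x, u x * u x * m x := by
    rw [← Finset.sum_add_sum_compl B (fun x => u x * u x * m x)]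
    have hB0 : 0 ≤ ∑ x ∈ B, u x * u x * m x :=
      Finset.sum_nonneg fun x _ => mul_nonneg (mul_self_nonneg _) (hm x).le
    have hcompl : ∑ x ∈ Bᶜ, u x * u x * m x
        = ∑ x : {x : V // x ∉ B}, v x * v x * m x.1 := by
      rw [Finset.sum_subtype Bᶜ (fun y => Finset.mem_compl)]
      refine Finset.sum_congr rfl fun x _ => ?_
      have hx : u x.1 = v x := by
        rw [hu]
        simp [N0, x.2]
      rw [hx]
    rw [hcompl]
    linarith
  -- the chain
  have hSsplit : ∑ x, glap m w u x * u x * m x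
      = ∑ x : {x : V // x ∉ B}, nlap m w B v x * v x * m x.1 := by
    rw [hu]
    exact hsplit v
  have hP : 0 < ∑ x, u x * u x * m x := lt_of_lt_of_le (hipvv ▸ hcpos) hvleu
  have hchain1 : μ iv * (∑ x, u x * u x * m x) ≤ ∑ l, μ l * (d l * d l) := by
    rw [hipuu_d]
    exact hlow
  have hchain2 : ∑ l, μ l * (d l * d l) = ∑ j, ν (e j) * (c j * c j) := by
    have e1 : -∑ l, μ l * (d l * d l) = -∑ j, ν (e j) * (c j * c j) := by
      rw [← hnegS, ← hnegSO, ← hSA, ← hSO, hSsplit]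
    linarith
  have hchain3 : ∑ j, ν (e j) * (c j * c j) ≤ ν i * (∑ x, u x * u x * m x) := by
    calc ∑ j, ν (e j) * (c j * c j) ≤ ν i * ∑ j, c j * c j := hhigh
      _ ≤ ν i * (∑ x, u x * u x * m x) := by
          refine mul_le_mul_of_nonneg_left ?_ hνnn
          rw [← hipvv]
          exact hvleu
  have hfinal : μ iv * (∑ x, u x * u x * m x) ≤ ν i * (∑ x, u x * u x * m x) := by
    calc μ iv * (∑ x, u x * u x * m x) ≤ ∑ l, μ l * (d l * d l) := hchain1
      _ = ∑ j, ν (e j) * (c j * c j) := hchain2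
      _ ≤ ν i * (∑ x, u x * u x * m x) := hchain3
  exact le_of_mul_le_mul_right hfinal hP
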